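/- Let n ≥ 1, let θ ∈ 𝕋, and let a, g be the unique coprime polynomials with g monic, deg a < deg g ≤ n/2 and |θ − a/g| < q^{−(n/2 + deg g)}. Set s = n − ⌊n/2⌋ − deg g. Then for any monic f₁, f₂ ∈ F_q[t] of degree n with f₁ ≡ f₂ mod R_{s,g}, one has e_q(f₁θ) = e_q(f₂θ). -/

import Mathlib

/-!
Common setup: `F_q((1/t))` is realized as `LaurentSeries Fq` (formal Laurent series in `X`)
under the identification `X = 1/t`; thus the coefficient of `t^i` is the coefficient of
`X^(-i)`, and `𝕋` consists of series supported on positive powers of `X`.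
-/

open Polynomial
open scoped Classical

/-- The element `t` of `F_q((1/t))`, i.e. the Laurent series `X⁻¹`. -/
noncomputable def tElem (Fq : Type) [Field Fq] : LaurentSeries Fq :=
  HahnSeries.single (-1 : ℤ) 1

/-- The natural embedding of `F_q[t]` into `F_q((1/t))`: evaluate the polynomial at `t`. -/
noncomputable def toL {Fq : Type} [Field Fq] (f : Polynomial Fq) : LaurentSeries Fq :=
  Polynomial.aeval (tElem Fq) f

/-- The norm on `F_q((1/t))`: `|x| = q^j` where `j` is the largest index with `x_j ≠ 0`
(in `t`-coefficients, so `j = -(order of the Hahn series)`), and `|0| = 0`. -/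
noncomputable def nrm {Fq : Type} [Field Fq] [Fintype Fq] (x : LaurentSeries Fq) : ℝ :=
  if x = 0 then 0 else (Fintype.card Fq : ℝ) ^ (-(HahnSeries.order x))

/-- `𝕋 = {∑_{i<0} x_i t^i}`: Laurent series supported on negative powers of `t`. -/
def TT (Fq : Type) [Field Fq] : Set (LaurentSeries Fq) :=
  {x | ∀ n : ℤ, n ≤ 0 → x.coeff n = 0}

/-- The exponential `e_q(x) = ψ(x_{-1})`, where `ψ(y) = e^{2πi·tr(y)/p}` with
`tr : F_q → F_p` the field trace, and `x_{-1}` is the coefficient of `t^{-1}` in `x`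
(the coefficient of `X^1` of the Hahn series). -/
noncomputable def eQ {Fq : Type} [Field Fq] [Fintype Fq] (p : ℕ) [CharP Fq p]
    (x : LaurentSeries Fq) : ℂ :=
  letI := ZMod.algebra Fq p
  Complex.exp (2 * Real.pi * Complex.I *
    (((Algebra.trace (ZMod p) Fq (x.coeff 1)).val : ℂ) / (p : ℂ)))

/-- The Möbius function on `F_q[t]`: `μ(f) = (-1)^r` if `f` is a product of `r` distinct
irreducibles, and `μ(f) = 0` otherwise. -/
noncomputable def mu {Fq : Type} [Field Fq] (f : Polynomial Fq) : ℤ :=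
  if Squarefree f then
    (-1) ^ Multiset.card (UniqueFactorizationMonoid.normalizedFactors f)
  else 0

/-- The monic polynomial `X^n + ∑_{i<n} c_i X^i`; monic polynomials of degree `n`
are exactly the `stdPoly n c` for a unique `c : Fin n → Fq`. -/
noncomputable def stdPoly {Fq : Type} [Field Fq] (n : ℕ) (c : Fin n → Fq) : Polynomial Fq :=
  X ^ n + ∑ i : Fin n, C (c i) * X ^ (i : ℕ)

/-- The polynomial `∑_{i<k} c_i X^i` of degree `< k`. -/
noncomputable def ltPoly {Fq : Type} [Field Fq] (k : ℕ) (c : Fin k → Fq) : Polynomial Fq :=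
  ∑ i : Fin k, C (c i) * X ^ (i : ℕ)

/-- Hayes' relation `R_{s,g}` on monic polynomials:
`a ≡ b mod R_{s,g}` iff `g ∣ a - b` and `|a/t^{deg a} - b/t^{deg b}| < q^{-s}`.
(Here `1/t^{deg a}` is the Laurent series `X^{deg a}`.) -/
def Requiv {Fq : Type} [Field Fq] [Fintype Fq] (s : ℕ) (g a b : Polynomial Fq) : Prop :=
  g ∣ (a - b) ∧
  nrm (toL a * HahnSeries.single (a.natDegree : ℤ) 1 -
        toL b * HahnSeries.single (b.natDegree : ℤ) 1)
    < (Fintype.card Fq : ℝ) ^ (-(s : ℤ))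

/-- `φ(g)`: the number of invertible residue classes modulo `g`. -/
noncomputable def phi {Fq : Type} [Field Fq] (g : Polynomial Fq) : ℕ :=
  Nat.card ((Polynomial Fq ⧸ Ideal.span {g})ˣ)

/-- `χ` is (the extension by zero of) a character of the unit group `R*_{s,g}` of the quotient
monoid of monic polynomials modulo `R_{s,g}`: it vanishes off monic polynomials, it is
multiplicative on monic polynomials, it is constant on `R_{s,g}`-classes, and it vanishes at a
monic polynomial exactly when that polynomial is not coprime to `g`.  (Such functions correspond
bijectively to the characters of the finite abelian group `R*_{s,g}`.) -/
def IsRChar {Fq : Type} [Field Fq] [Fintype Fq] (s : ℕ) (g : Polynomial Fq)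
    (χ : Polynomial Fq → ℂ) : Prop :=
  (∀ f : Polynomial Fq, ¬ f.Monic → χ f = 0) ∧
  (∀ a b : Polynomial Fq, a.Monic → b.Monic → χ (a * b) = χ a * χ b) ∧
  (∀ a b : Polynomial Fq, a.Monic → b.Monic → Requiv s g a b → χ a = χ b) ∧
  (∀ f : Polynomial Fq, f.Monic → (χ f = 0 ↔ ¬ IsCoprime f g))

/-- (Lemma 3.) With `a, g` the approximation of `θ` from Lemma 2 and
`s = n - ⌊n/2⌋ - deg g`, for any monic `f₁, f₂` of degree `n` with `f₁ ≡ f₂ mod R_{s,g}`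
one has `e_q(f₁θ) = e_q(f₂θ)`. -/
lemma algebraMap_eq_single {Fq : Type} [Field Fq] (c : Fq) :
    (algebraMap Fq (LaurentSeries Fq)) c = HahnSeries.single (0 : ℤ) c := by
  rw [HahnSeries.algebraMap_apply', PowerSeries.algebraMap_apply,
    HahnSeries.ofPowerSeries_C, HahnSeries.C_apply]
  simp

lemma toL_monomial {Fq : Type} [Field Fq] (i : ℕ) (c : Fq) :
    toL (monomial i c) = HahnSeries.single (-(i : ℤ)) c := by
  unfold toL tElem
  rw [aeval_monomial, HahnSeries.single_pow, algebraMap_eq_single,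
    HahnSeries.single_mul_single]
  norm_num

lemma toL_coeff_pos {Fq : Type} [Field Fq] (f : Polynomial Fq) {k : ℤ} (hk : 0 < k) :
    (toL f).coeff k = 0 := by
  induction f using Polynomial.induction_on' with
  | add p q hp hq =>
      show (toL (p + q)).coeff k = 0
      rw [show toL (p + q) = toL p + toL q from map_add (aeval (tElem Fq)) p q,
        HahnSeries.coeff_add, hp, hq, add_zero]
  | monomial i c =>
      rw [toL_monomial, HahnSeries.coeff_single_of_ne]
      omega

lemma toL_coeff_neg {Fq : Type} [Field Fq] (f : Polynomial Fq) (i : ℕ) :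
    (toL f).coeff (-(i : ℤ)) = f.coeff i := by
  induction f using Polynomial.induction_on' with
  | add p q hp hq =>
      rw [show toL (p + q) = toL p + toL q from map_add (aeval (tElem Fq)) p q,
        HahnSeries.coeff_add, hp, hq, Polynomial.coeff_add]
  | monomial j c =>
      rw [toL_monomial, HahnSeries.coeff_single, Polynomial.coeff_monomial]
      by_cases h : j = i
      · subst h; simp
      · rw [if_neg h, if_neg (by omega)]

lemma toL_ne_zero {Fq : Type} [Field Fq] {f : Polynomial Fq} (hf : f ≠ 0) :
    toL f ≠ 0 := by
  intro h
  apply hf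
  ext i
  rw [← toL_coeff_neg, h, HahnSeries.coeff_zero, Polynomial.coeff_zero]

theorem eQ_eq_of_Requiv
    (Fq : Type) [Field Fq] [Fintype Fq] (p : ℕ) [Fact p.Prime] [CharP Fq p]
    (n : ℕ) (hn : 1 ≤ n) (θ : LaurentSeries Fq) (hθ : θ ∈ TT Fq)
    (a g : Polynomial Fq) (hcop : IsCoprime a g) (hgm : g.Monic)
    (hdeg : a.degree < g.degree) (hdeg2 : 2 * g.natDegree ≤ n)
    (happrox : nrm (θ - toL a / toL g)
      < (Fintype.card Fq : ℝ) ^ (-((n : ℝ) / 2 + (g.natDegree : ℝ))))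
    (f₁ f₂ : Polynomial Fq) (h₁ : f₁.Monic) (h₂ : f₂.Monic)
    (hd₁ : f₁.natDegree = n) (hd₂ : f₂.natDegree = n)
    (hequiv : Requiv (n - n / 2 - g.natDegree) g f₁ f₂) :
    eQ p (toL f₁ * θ) = eQ p (toL f₂ * θ) := by
  have hq1 : (1 : ℝ) < (Fintype.card Fq : ℝ) := by
    exact_mod_cast (Fintype.one_lt_card : 1 < Fintype.card Fq)
  set D : LaurentSeries Fq := toL (f₁ - f₂) with hDdef
  set β : LaurentSeries Fq := θ - toL a / toL g with hβdef
  obtain ⟨hdvd, hnrm⟩ := hequiv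
  obtain ⟨h, hh⟩ := hdvd
  have hg0 : g ≠ 0 := hgm.ne_zero
  have hgL : toL g ≠ 0 := toL_ne_zero hg0
  -- key coefficient identity
  have key : (toL f₁ * θ).coeff 1 = (toL f₂ * θ).coeff 1 := by
    have hDsub : D = toL f₁ - toL f₂ := map_sub (aeval (tElem Fq)) f₁ f₂
    have hsplit : toL f₁ * θ - toL f₂ * θ = toL (h * a) + D * β := by
      have e1 : D = toL g * toL h := by
        rw [hDdef, hh]; exact map_mul (aeval (tElem Fq)) g h
      have e2 : D * (toL a / toL g) = toL (h * a) := by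
        rw [e1, show toL (h * a) = toL h * toL a from map_mul (aeval (tElem Fq)) h a]
        field_simp
      rw [hβdef]
      rw [show toL f₁ * θ - toL f₂ * θ = D * θ by rw [hDsub]; ring]
      rw [← e2]
      ring
    -- (toL (h*a)).coeff 1 = 0
    have hA : (toL (h * a)).coeff 1 = 0 := toL_coeff_pos _ one_pos
    -- (D * β).coeff 1 = 0
    have hB : (D * β).coeff 1 = 0 := by
      by_cases hD0 : D = 0
      · rw [hD0, zero_mul, HahnSeries.coeff_zero]
      by_cases hβ0 : β = 0
      · rw [hβ0, mul_zero, HahnSeries.coeff_zero]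
      -- order of D
      have hDn : toL f₁ * HahnSeries.single ((f₁.natDegree : ℤ)) 1 -
          toL f₂ * HahnSeries.single ((f₂.natDegree : ℤ)) 1
          = D * HahnSeries.single ((n : ℤ)) 1 := by
        rw [hd₁, hd₂, hDsub]; ring
      rw [hDn] at hnrm
      have hDs : D * HahnSeries.single ((n : ℤ)) 1 ≠ 0 :=
        mul_ne_zero hD0 (HahnSeries.single_ne_zero one_ne_zero)
      rw [nrm, if_neg hDs, HahnSeries.order_mul hD0 (HahnSeries.single_ne_zero one_ne_zero),
        HahnSeries.order_single one_ne_zero] at hnrm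
      have hDo : -(D.order + (n : ℤ)) < -((n - n / 2 - g.natDegree : ℕ) : ℤ) :=
        (zpow_lt_zpow_iff_right₀ hq1).mp hnrm
      -- order of β
      have hordβ : ((n / 2 + g.natDegree : ℕ) : ℤ) < β.order := by
        rw [nrm, if_neg hβ0] at happrox
        have hcast : ((Fintype.card Fq : ℝ)) ^ (-β.order)
            = (Fintype.card Fq : ℝ) ^ ((-β.order : ℤ) : ℝ) :=
          (Real.rpow_intCast _ (-β.order)).symm
        rw [hcast] at happrox
        have hlt : ((-β.order : ℤ) : ℝ) < -((n : ℝ) / 2 + (g.natDegree : ℝ)) :=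
          (Real.rpow_lt_rpow_left_iff hq1).mp happrox
        have hfl : ((n / 2 + g.natDegree : ℕ) : ℝ) ≤ (n : ℝ) / 2 + (g.natDegree : ℝ) := by
          rw [Nat.cast_add]
          have h5 : ((n / 2 : ℕ) : ℝ) ≤ (n : ℝ) / 2 := by
            have := Nat.cast_div_le (α := ℝ) (m := n) (n := 2)
            norm_num at this
            exact this
          linarith
        have h4 : ((n / 2 + g.natDegree : ℕ) : ℝ) < ((β.order : ℤ) : ℝ) := by
          push_cast at hlt
          linarith
        have h6 : (((n / 2 + g.natDegree : ℕ) : ℤ) : ℝ) < ((β.order : ℤ) : ℝ) := by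
          rw [Int.cast_natCast]; exact h4
        exact Int.cast_lt.mp h6
      have hord : (1 : ℤ) < (D * β).order := by
        rw [HahnSeries.order_mul hD0 hβ0]
        omega
      exact HahnSeries.coeff_eq_zero_of_lt_order hord
    have h2 := congrArg (fun x : LaurentSeries Fq => x.coeff 1) hsplit
    simp only [HahnSeries.coeff_sub, HahnSeries.coeff_add, hA, hB, add_zero] at h2
    exact sub_eq_zero.mp h2
  unfold eQ
  rw [key]
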